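/- Let α > 0, μ̃ > 0 and t > 0. Then ∫₀ᵗ √( μ̃ / (α·(1 − e^{−2μ̃(t−r)})) ) dr = arctanh(√(1 − e^{−2μ̃t}))/√(α·μ̃) (an improper but finite integral). -/

import Mathlib

open MeasureTheory intervalIntegral Set

/-- The inverse hyperbolic tangent, `arctanh x = (1/2) log ((1+x)/(1-x))`
(Mathlib has no `arctanh`, so we define it). -/
noncomputable def Real.arctanh (x : ℝ) : ℝ := (1 / 2) * Real.log ((1 + x) / (1 - x))

/-- the total amount sold by the candidate optimal strategy
`ζ̂(r) = √( μ / (α (1 - e^{-2 μ (t-r)})) )` in case (i) of the log-quadratic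
market impact problem:
`∫₀ᵗ ζ̂(r) dr = arctanh (√(1 - e^{-2 μ t})) / √(α μ)`. -/
theorem logQuadratic_candidate_total_sales_case_i (α μ t : ℝ)
    (hα : 0 < α) (hμ : 0 < μ) (ht : 0 < t) :
    (∫ r in (0 : ℝ)..t,
        Real.sqrt (μ / (α * (1 - Real.exp (-2 * μ * (t - r))))))
      = Real.arctanh (Real.sqrt (1 - Real.exp (-2 * μ * t))) / Real.sqrt (α * μ) := by
  set s : ℝ := Real.sqrt (α * μ) with hs
  have hspos : 0 < s := Real.sqrt_pos.mpr (mul_pos hα hμ)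
  set g : ℝ → ℝ := fun r => Real.sqrt (1 - Real.exp (-2 * μ * (t - r))) with hg
  set G : ℝ → ℝ := fun r => -(1/s) * ((1/2) * (Real.log (1 + g r) - Real.log (1 - g r))) with hG
  have hEpos : ∀ r : ℝ, 0 < Real.exp (-2 * μ * (t - r)) := fun r => Real.exp_pos _
  have hg_nonneg : ∀ r : ℝ, 0 ≤ g r := fun r => Real.sqrt_nonneg _
  have hg_lt_one : ∀ r : ℝ, g r < 1 := by
    intro r
    have : (1 : ℝ) - Real.exp (-2 * μ * (t - r)) < 1 ^ 2 := by
      have := hEpos r; nlinarith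
    exact (Real.sqrt_lt' one_pos).mpr this
  have h1pg : ∀ r : ℝ, 0 < 1 + g r := fun r => by linarith [hg_nonneg r]
  have h1mg : ∀ r : ℝ, 0 < 1 - g r := fun r => by linarith [hg_lt_one r]
  -- continuity of G on [0, t]
  have hgc : Continuous g := by
    apply Real.continuous_sqrt.comp
    continuity
  have hcont : ContinuousOn G (Icc 0 t) := by
    apply ContinuousOn.mul continuousOn_const
    apply ContinuousOn.mul continuousOn_const
    apply ContinuousOn.sub
    · exact ContinuousOn.log (by fun_prop) (fun x _ => (h1pg x).ne')
    · exact ContinuousOn.log (by fun_prop) (fun x _ => (h1mg x).ne')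
  -- the integrand
  set f : ℝ → ℝ := fun r => Real.sqrt (μ / (α * (1 - Real.exp (-2 * μ * (t - r))))) with hf
  -- derivative on the interior
  have hderiv : ∀ x ∈ Ioo (0:ℝ) t, HasDerivWithinAt G (f x) (Ioi x) x := by
    intro x hx
    have hxt : x < t := hx.2
    set E : ℝ := Real.exp (-2 * μ * (t - x)) with hE
    have hE1 : E < 1 := by
      rw [hE, Real.exp_lt_one_iff]
      nlinarith
    have h1mE : 0 < 1 - E := by linarith
    set S : ℝ := g x with hS
    have hSpos : 0 < S := Real.sqrt_pos.mpr h1mE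
    have hSe : S = Real.sqrt (1 - E) := by simp only [hS, hg, hE]
    have hS2 : S ^ 2 = 1 - E := by rw [hSe]; exact Real.sq_sqrt h1mE.le
    -- build the derivative
    have h0 : HasDerivAt (fun r : ℝ => t - r) (-1) x := by
      exact (hasDerivAt_id x).const_sub t
    have h1 : HasDerivAt (fun r : ℝ => -2 * μ * (t - r)) (2 * μ) x := by
      have h := h0.const_mul (-2 * μ)
      exact h.congr_deriv (by ring)
    have h2 : HasDerivAt (fun r : ℝ => Real.exp (-2 * μ * (t - r))) (E * (2 * μ)) x := h1.exp
    have h3 : HasDerivAt (fun r : ℝ => 1 - Real.exp (-2 * μ * (t - r))) (-(E * (2 * μ))) x := by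
      exact h2.const_sub 1
    have h4 : HasDerivAt g (-(E * (2 * μ)) / (2 * S)) x := h3.sqrt h1mE.ne'
    have h5 : HasDerivAt (fun r : ℝ => 1 + g r) (-(E * (2 * μ)) / (2 * S)) x := by
      exact h4.const_add 1
    have h6 : HasDerivAt (fun r : ℝ => 1 - g r) (-(-(E * (2 * μ)) / (2 * S))) x := by
      exact h4.const_sub 1
    have h7 : HasDerivAt (fun r : ℝ => Real.log (1 + g r))
        ((-(E * (2 * μ)) / (2 * S)) / (1 + S)) x := h5.log (h1pg x).ne'
    have h8 : HasDerivAt (fun r : ℝ => Real.log (1 - g r))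
        ((-(-(E * (2 * μ)) / (2 * S))) / (1 - S)) x := h6.log (h1mg x).ne'
    have h9 : HasDerivAt G
        (-(1/s) * ((1/2) * ((-(E * (2 * μ)) / (2 * S)) / (1 + S)
          - (-(-(E * (2 * μ)) / (2 * S))) / (1 - S)))) x :=
      ((h7.sub h8).const_mul (1/2)).const_mul (-(1/s))
    have key : (-(1/s) * ((1/2) * ((-(E * (2 * μ)) / (2 * S)) / (1 + S)
          - (-(-(E * (2 * μ)) / (2 * S))) / (1 - S)))) = f x := by
      have ha : Real.sqrt α ^ 2 = α := Real.sq_sqrt hα.le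
      have hm : Real.sqrt μ ^ 2 = μ := Real.sq_sqrt hμ.le
      have hapos : 0 < Real.sqrt α := Real.sqrt_pos.mpr hα
      have hmpos : 0 < Real.sqrt μ := Real.sqrt_pos.mpr hμ
      have hsam : s = Real.sqrt α * Real.sqrt μ := Real.sqrt_mul hα.le μ
      have hfe : f x = Real.sqrt (μ / (α * (1 - E))) := by simp only [hf, hE]
      have hfx : f x = Real.sqrt μ / (Real.sqrt α * S) := by
        rw [hfe, Real.sqrt_div hμ.le, Real.sqrt_mul hα.le, ← hSe]
      rw [hfx, hsam]
      have hEeq : E = 1 - S ^ 2 := by linarith [hS2]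
      rw [hEeq]
      have hmu : μ = Real.sqrt μ ^ 2 := hm.symm
      rw [hmu]
      have n1 : (1:ℝ) + S ≠ 0 := (h1pg x).ne'
      have n2 : (1:ℝ) - S ≠ 0 := (h1mg x).ne'
      field_simp
      rw [Real.sqrt_sq hmpos.le]; ring
    rw [← key]
    exact h9.hasDerivWithinAt
  -- integrability of f on [0, t]
  have hint : IntervalIntegrable f volume 0 t := by
    set C : ℝ := Real.sqrt (Real.exp (2 * μ * t) / (2 * α)) with hC
    have hIrpow : IntervalIntegrable (fun u : ℝ => u ^ (-(1/2) : ℝ)) volume 0 t :=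
      intervalIntegral.intervalIntegrable_rpow' (by norm_num)
    have hIcomp : IntervalIntegrable (fun r : ℝ => (t - r) ^ (-(1/2) : ℝ)) volume 0 t := by
      have := (hIrpow.comp_sub_left t).symm
      simpa using this
    have hIg : IntervalIntegrable (fun r : ℝ => C * (t - r) ^ (-(1/2) : ℝ)) volume 0 t :=
      hIcomp.const_mul C
    apply hIg.mono_fun'
    · apply Measurable.aestronglyMeasurable
      simp only [hf]
      fun_prop
    · rw [Filter.EventuallyLE, ae_restrict_iff' measurableSet_uIoc]
      apply Filter.Eventually.of_forall
      intro r hr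
      rw [Set.uIoc_of_le ht.le] at hr
      have hrt : r ≤ t := hr.2
      have hfnn : 0 ≤ f r := Real.sqrt_nonneg _
      rw [Real.norm_eq_abs, abs_of_nonneg hfnn]
      rcases eq_or_lt_of_le hrt with hrt' | hrt'
      · simp only [hf, hrt', sub_self, mul_zero, neg_zero, Real.exp_zero]
        norm_num [Real.zero_rpow, div_zero, Real.sqrt_zero]
      · -- r < t
        have htr : 0 < t - r := by linarith
        set y : ℝ := 2 * μ * (t - r) with hy
        have hypos : 0 < y := by positivity
        have hyle : y ≤ 2 * μ * t := by nlinarith [hr.1]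
        have hEr : Real.exp (-2 * μ * (t - r)) = Real.exp (-y) := by rw [hy]; ring_nf
        have hex1 : Real.exp (-y) < 1 := by
          rw [Real.exp_lt_one_iff]; linarith
        have hlow : Real.exp (-(2 * μ * t)) * y ≤ 1 - Real.exp (-y) := by
          have h1 : y + 1 ≤ Real.exp y := Real.add_one_le_exp y
          have h2 : Real.exp (-(2 * μ * t)) ≤ Real.exp (-y) :=
            Real.exp_le_exp.mpr (by linarith)
          have h3 : Real.exp (-y) * Real.exp y = 1 := by
            rw [← Real.exp_add]; simp
          have h4 : 0 < Real.exp (-y) := Real.exp_pos _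
          nlinarith
        have heq : μ / (α * (Real.exp (-(2*μ*t)) * y))
            = Real.exp (2*μ*t) / (2*α) * (t-r)⁻¹ := by
          rw [hy, Real.exp_neg]
          have hE2 : (0:ℝ) < Real.exp (2*μ*t) := Real.exp_pos _
          field_simp
        have hb1 : μ / (α * (1 - Real.exp (-2 * μ * (t - r))))
            ≤ Real.exp (2*μ*t) / (2*α) * (t-r)⁻¹ := by
          rw [hEr, ← heq]
          gcongr
        have hfr : f r = Real.sqrt (μ / (α * (1 - Real.exp (-2 * μ * (t - r))))) := by
          simp only [hf]
        rw [hfr]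
        calc Real.sqrt (μ / (α * (1 - Real.exp (-2 * μ * (t - r)))))
            ≤ Real.sqrt (Real.exp (2 * μ * t) / (2 * α) * (t - r)⁻¹) :=
              Real.sqrt_le_sqrt hb1
          _ = C * (t - r) ^ (-(1/2) : ℝ) := by
              rw [Real.sqrt_mul (by positivity), Real.sqrt_inv, hC,
                Real.rpow_neg htr.le, ← Real.sqrt_eq_rpow]
  -- apply FTC
  have hFTC := intervalIntegral.integral_eq_sub_of_hasDeriv_right_of_le ht.le hcont hderiv hint
  rw [hFTC]
  -- compute G t and G 0
  have hgt : g t = 0 := by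
    simp only [hg]; simp
  have hGt : G t = 0 := by
    simp only [hG, hgt]; simp
  have hg0 : g 0 = Real.sqrt (1 - Real.exp (-2 * μ * t)) := by
    simp only [hg, sub_zero]
  have hG0 : G 0 = -(Real.arctanh (Real.sqrt (1 - Real.exp (-2 * μ * t))) / s) := by
    simp only [hG, Real.arctanh, ← hg0]
    rw [Real.log_div (h1pg 0).ne' (h1mg 0).ne']
    ring
  rw [hGt, hG0]
  ring
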